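/- Let L and R be the left- and right-shift operators on ℓ^p(ℕ). Define f_n := ζ_n, τ_n := L e_n, g_n := ζ_n ∘ R, ω_n := e_n. Then (\{f_n\},\{τ_n\}) and (\{g_n\},\{ω_n\}) are approximately dual p-approximate Bessel sequences for ℓ^p(ℕ), yet neither is a p-approximate Schauder frame (their frame operators θ_τ θ_f = L and θ_ω θ_g = R are not invertible). -/
import Mathlib


open scoped ENNReal
open Filter Topology

noncomputable section

/-- The sequence space `ℓ^p(ℕ)` over `ℝ`. -/
abbrev lpN (p : ℝ≥0∞) := lp (fun _ : ℕ => ℝ) p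

/-- A pair `({f_n}, {τ_n})` is a p-approximate Bessel sequence (p-ABS) for `X`:
the analysis map `x ↦ (f_n x)_n` is a well-defined bounded linear operator into `ℓ^p`,
and the synthesis map `(a_n) ↦ Σ a_n τ_n` is a well-defined bounded linear operator. -/
def IsPABS (p : ℝ≥0∞) [Fact (1 ≤ p)] {X : Type*} [NormedAddCommGroup X] [NormedSpace ℝ X]
    (f : ℕ → X →L[ℝ] ℝ) (τ : ℕ → X) : Prop :=
  (∃ θf : X →L[ℝ] lpN p, ∀ (x : X) (n : ℕ), (θf x) n = f n x) ∧
  (∃ θτ : lpN p →L[ℝ] X, ∀ a : lpN p, HasSum (fun n => (a n) • τ n) (θτ a))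

/-- A pair `({f_n}, {τ_n})` is a p-approximate Schauder frame (p-ASF) for `X`:
it is a p-ABS whose frame operator `S_{f,τ} = θ_τ ∘ θ_f` is bounded invertible. -/
def IsPASF (p : ℝ≥0∞) [Fact (1 ≤ p)] {X : Type*} [NormedAddCommGroup X] [NormedSpace ℝ X]
    (f : ℕ → X →L[ℝ] ℝ) (τ : ℕ → X) : Prop :=
  ∃ (θf : X →L[ℝ] lpN p) (θτ : lpN p →L[ℝ] X) (S : X ≃L[ℝ] X),
    (∀ (x : X) (n : ℕ), (θf x) n = f n x) ∧
    (∀ a : lpN p, HasSum (fun n => (a n) • τ n) (θτ a)) ∧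
    (S : X →L[ℝ] X) = θτ.comp θf

/-- Auxiliary: every `a ∈ ℓ^p` is the sum of `a n • e_n` when `p ≠ ∞`. -/
lemma hsum_e (p : ℝ≥0∞) [Fact (1 ≤ p)] (hp : p ≠ ∞) (a : lpN p) :
    HasSum (fun n => (a n) • (lp.single p n (1:ℝ) : lpN p)) a := by
  have := lp.hasSum_single hp a
  convert this using 2 with n
  rw [← lp.single_smul, smul_eq_mul, mul_one]

/-- with `f_n = ζ_n`, `τ_n = L e_n`, `g_n = ζ_n ∘ R`, `ω_n = e_n` on `ℓ^p(ℕ)`,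
the two pairs are approximately dual p-ABSs, yet neither is a p-ASF. -/
theorem approx_dual_pABS_not_pASF
    (p : ℝ≥0∞) [Fact (1 ≤ p)] (hp : p ≠ ∞)
    (ζ : ℕ → lpN p →L[ℝ] ℝ) (hζ : ∀ (a : lpN p) (n : ℕ), ζ n a = a n)
    (R L : lpN p →L[ℝ] lpN p)
    (hR0 : ∀ a : lpN p, (R a) 0 = 0)
    (hR : ∀ (a : lpN p) (n : ℕ), (R a) (n + 1) = a n)
    (hL : ∀ (a : lpN p) (n : ℕ), (L a) n = a (n + 1)) :
    IsPABS p (fun n => ζ n) (fun n => L (lp.single p n 1)) ∧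
    IsPABS p (fun n => (ζ n).comp R) (fun n => lp.single p n 1) ∧
    (∀ (θf θω : lpN p →L[ℝ] lpN p),
      (∀ (x : lpN p) (n : ℕ), (θf x) n = ζ n x) →
      (∀ a : lpN p, HasSum (fun n => (a n) • (lp.single p n 1 : lpN p)) (θω a)) →
      ‖ContinuousLinearMap.id ℝ (lpN p) - θω.comp θf‖ < 1) ∧
    (∀ (θτ θg : lpN p →L[ℝ] lpN p),
      (∀ a : lpN p, HasSum (fun n => (a n) • L (lp.single p n 1)) (θτ a)) →
      (∀ (x : lpN p) (n : ℕ), (θg x) n = ζ n (R x)) →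
      ‖ContinuousLinearMap.id ℝ (lpN p) - θτ.comp θg‖ < 1) ∧
    ¬ IsPASF p (fun n => ζ n) (fun n => L (lp.single p n 1)) ∧
    ¬ IsPASF p (fun n => (ζ n).comp R) (fun n => lp.single p n 1) := by
  -- L applied to the expansion:
  have hLsum : ∀ a : lpN p,
      HasSum (fun n => (a n) • L (lp.single p n 1)) (L a) := by
    intro a
    have := (hsum_e p hp a).mapL L
    simpa only [map_smul] using this
  -- uniqueness of synthesis for ω = e:
  have hωid : ∀ (θω : lpN p →L[ℝ] lpN p),
      (∀ a : lpN p, HasSum (fun n => (a n) • (lp.single p n 1 : lpN p)) (θω a)) →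
      ∀ a, θω a = a := fun θω h a => (h a).unique (hsum_e p hp a)
  -- uniqueness of synthesis for τ = L e:
  have hτL : ∀ (θτ : lpN p →L[ℝ] lpN p),
      (∀ a : lpN p, HasSum (fun n => (a n) • L (lp.single p n 1)) (θτ a)) →
      ∀ a, θτ a = L a := fun θτ h a => (h a).unique (hLsum a)
  -- analysis uniqueness
  have hfid : ∀ (θf : lpN p →L[ℝ] lpN p),
      (∀ (x : lpN p) (n : ℕ), (θf x) n = ζ n x) → ∀ x, θf x = x := by
    intro θf h x
    exact lp.ext (funext fun n => by rw [h x n, hζ])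
  have hgR : ∀ (θg : lpN p →L[ℝ] lpN p),
      (∀ (x : lpN p) (n : ℕ), (θg x) n = ζ n (R x)) → ∀ x, θg x = R x := by
    intro θg h x
    exact lp.ext (funext fun n => by rw [h x n, hζ])
  have hLR : ∀ a : lpN p, L (R a) = a := by
    intro a
    exact lp.ext (funext fun n => by rw [hL, hR])
  refine ⟨⟨⟨ContinuousLinearMap.id ℝ (lpN p), fun x n => (hζ x n).symm⟩, ⟨L, hLsum⟩⟩,
    ⟨⟨R, fun x n => by simp [hζ]⟩, ⟨ContinuousLinearMap.id ℝ (lpN p),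
      fun a => hsum_e p hp a⟩⟩, ?_, ?_, ?_, ?_⟩
  · intro θf θω h1 h2
    have : ContinuousLinearMap.id ℝ (lpN p) - θω.comp θf = 0 := by
      ext x
      simp [hfid θf h1 x, hωid θω h2 x]
    rw [this, norm_zero]; norm_num
  · intro θτ θg h1 h2
    have : ContinuousLinearMap.id ℝ (lpN p) - θτ.comp θg = 0 := by
      ext x
      simp [hgR θg h2 x, hτL θτ h1 (R x), hLR x]
    rw [this, norm_zero]; norm_num
  · rintro ⟨θf, θτ, S, h1, h2, h3⟩
    -- S = L, but L kills e₀ ≠ 0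
    have hS : ∀ x, S x = L x := by
      intro x
      have : (S : lpN p →L[ℝ] lpN p) x = θτ (θf x) := by rw [h3]; rfl
      rw [ContinuousLinearEquiv.coe_coe] at this
      rw [this, hfid θf h1 x, hτL θτ h2 x]
    have he0 : (lp.single p 0 (1:ℝ) : lpN p) ≠ 0 := by
      intro h
      have := congrArg (fun f : lpN p => (f : ∀ _ : ℕ, ℝ) 0) h
      simp only [lp.single_apply_self] at this
      simp at this
    apply he0
    apply S.injective
    rw [hS, map_zero]
    exact lp.ext (funext fun n => by
      rw [hL]
      have := lp.single_apply_ne (E := fun _ : ℕ => ℝ) p 0 (1:ℝ) (Nat.succ_ne_zero n)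
      simpa using this)
  · rintro ⟨θg, θω, S, h1, h2, h3⟩
    -- S = R, but R is not surjective (misses e₀)
    have hS : ∀ x, S x = R x := by
      intro x
      have : (S : lpN p →L[ℝ] lpN p) x = θω (θg x) := by rw [h3]; rfl
      rw [ContinuousLinearEquiv.coe_coe] at this
      rw [this, hgR θg h1 x, hωid θω h2 (R x)]
    obtain ⟨x, hx⟩ := S.surjective (lp.single p 0 (1:ℝ))
    rw [hS] at hx
    have h0 : (R x) 0 = (lp.single p 0 (1:ℝ) : lpN p) 0 := by rw [hx]
    rw [hR0, lp.single_apply_self] at h0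
    exact zero_ne_one h0
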